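/- The number of labelled rooted forests on k vertices (forests on vertex set {1,...,k} with one distinguished root in each component) with exactly m components equals C(k-1, m-1) * k^(k-m). -/

import Mathlib

open SimpleGraph Finset

section Lemmas
variable {V : Type*}

lemma reach_sup_edge {G : SimpleGraph V} {a b x y : V}
    (h : (G ⊔ edge a b).Reachable x y) :
    G.Reachable x y ∨ (G.Reachable x a ∧ G.Reachable b y) ∨
      (G.Reachable x b ∧ G.Reachable a y) := by
  obtain ⟨w⟩ := h
  induction w with
  | nil => exact Or.inl (Reachable.refl _)
  | cons h' p ih =>
    rcases h' with h' | h'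
    · have hxz : G.Reachable _ _ := h'.reachable
      rcases ih with h1 | ⟨h1, h2⟩ | ⟨h1, h2⟩
      · exact Or.inl (hxz.trans h1)
      · exact Or.inr (Or.inl ⟨hxz.trans h1, h2⟩)
      · exact Or.inr (Or.inr ⟨hxz.trans h1, h2⟩)
    · rw [edge_adj] at h'
      rcases h'.1 with ⟨rfl, rfl⟩ | ⟨rfl, rfl⟩
      · rcases ih with h1 | ⟨h1, h2⟩ | ⟨h1, h2⟩
        · exact Or.inr (Or.inl ⟨Reachable.refl _, h1⟩)
        · exact Or.inl (h1.symm.trans h2)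
        · exact Or.inl h2
      · rcases ih with h1 | ⟨h1, h2⟩ | ⟨h1, h2⟩
        · exact Or.inr (Or.inr ⟨Reachable.refl _, h1⟩)
        · exact Or.inl h2
        · exact Or.inr (Or.inr ⟨Reachable.refl _, h2⟩)

lemma sup_edge_adj {G : SimpleGraph V} {a b : V} (hne : a ≠ b) : (G ⊔ edge a b).Adj a b :=
  Or.inr ((edge_adj a b a b).mpr ⟨Or.inl ⟨rfl, rfl⟩, hne⟩)

lemma sup_edge_sdiff_eq {G : SimpleGraph V} {a b : V} (h : ¬ G.Adj a b) (hne : a ≠ b) :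
    (G ⊔ edge a b) \ fromEdgeSet {s(a, b)} = G := by
  ext x y
  simp only [sdiff_adj, sup_adj, edge_adj, fromEdgeSet_adj, Set.mem_singleton_iff,
    Sym2.eq_iff]
  constructor
  · rintro ⟨h1 | h1, h2⟩
    · exact h1
    · tauto
  · intro hxy
    refine ⟨Or.inl hxy, ?_⟩
    rintro ⟨(⟨rfl, rfl⟩ | ⟨rfl, rfl⟩), -⟩
    · exact h hxy
    · exact h hxy.symm

lemma sdiff_sup_edge_eq {G : SimpleGraph V} {a b : V} (h : G.Adj a b) :
    (G \ fromEdgeSet {s(a, b)}) ⊔ edge a b = G := by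
  ext x y
  simp only [sup_adj, sdiff_adj, fromEdgeSet_adj, Set.mem_singleton_iff, edge_adj, Sym2.eq_iff]
  constructor
  · rintro (⟨h1, -⟩ | ⟨(⟨rfl, rfl⟩ | ⟨rfl, rfl⟩), -⟩)
    · exact h1
    · exact h
    · exact h.symm
  · intro hxy
    by_cases hc : (x = a ∧ y = b) ∨ (x = b ∧ y = a)
    · exact Or.inr ⟨hc, hxy.ne⟩
    · exact Or.inl ⟨hxy, by tauto⟩

lemma isAcyclic_sdiff {G H : SimpleGraph V} (hG : G.IsAcyclic) : (G \ H).IsAcyclic := by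
  intro v c hc
  exact hG (c.transfer G (fun e he => edgeSet_mono sdiff_le (c.edges_subset_edgeSet he)))
    (hc.transfer _)

lemma isAcyclic_sup_edge {G : SimpleGraph V} {a b : V} (hG : G.IsAcyclic)
    (hnr : ¬ G.Reachable a b) (hne : a ≠ b) : (G ⊔ edge a b).IsAcyclic := by
  have hna : ¬ G.Adj a b := fun h => hnr h.reachable
  intro v c hc
  by_cases he : s(a, b) ∈ c.edges
  · have := (adj_and_reachable_delete_edges_iff_exists_cycle.mpr ⟨v, c, hc, he⟩).2
    change ((G ⊔ edge a b) \ fromEdgeSet {s(a, b)}).Reachable a b at this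
    rw [sup_edge_sdiff_eq hna hne] at this
    exact hnr this
  · refine hG (c.transfer G fun e hec => ?_) (hc.transfer _)
    have h1 := c.edges_subset_edgeSet hec
    rw [edgeSet_sup] at h1
    rcases h1 with h1 | h1
    · exact h1
    · exfalso
      rw [edge, edgeSet_fromEdgeSet] at h1
      obtain ⟨h2, -⟩ := h1
      rw [Set.mem_singleton_iff] at h2
      exact he (h2 ▸ hec)

lemma card_components_eq_card_roots {G : SimpleGraph V} {S : Finset V}
    (h : ∀ v, ∃! r, r ∈ S ∧ G.Reachable r v) :
    Nat.card G.ConnectedComponent = S.card := by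
  have e : {r // r ∈ S} ≃ G.ConnectedComponent := by
    refine Equiv.ofBijective (fun r => G.connectedComponentMk r) ⟨?_, ?_⟩
    · rintro ⟨r1, h1⟩ ⟨r2, h2⟩ hmk
      have hr : G.Reachable r1 r2 := (SimpleGraph.ConnectedComponent.eq).mp hmk
      exact Subtype.ext ((h r2).unique ⟨h1, hr⟩ ⟨h2, Reachable.refl _⟩)
    · intro c
      obtain ⟨v, rfl⟩ := c.exists_rep
      obtain ⟨r, ⟨hrS, hrv⟩, -⟩ := h v
      exact ⟨⟨r, hrS⟩, (SimpleGraph.ConnectedComponent.eq).mpr hrv⟩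
  rw [← Nat.card_congr e, Nat.card_eq_fintype_card, Fintype.card_coe]

lemma exists_parent {G : SimpleGraph V} {r ρ : V} (hr : G.Reachable r ρ) (hne : r ≠ ρ) :
    ∃ x, G.Adj r x ∧ (G \ fromEdgeSet {s(r, x)}).Reachable x ρ := by
  refine hr.elim_path fun p => ?_
  obtain ⟨w, hw⟩ := p
  cases w with
  | nil => exact absurd rfl hne
  | @cons _ x _ h' q =>
    rw [SimpleGraph.Walk.cons_isPath_iff] at hw
    refine ⟨x, h', ⟨q.transfer _ fun e he => ?_⟩⟩
    rw [edgeSet_sdiff, Set.mem_diff, edgeSet_fromEdgeSet]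
    refine ⟨q.edges_subset_edgeSet he, ?_⟩
    rintro ⟨he2, -⟩
    rw [Set.mem_singleton_iff] at he2
    subst he2
    exact hw.2 (SimpleGraph.Walk.fst_mem_support_of_mem_edges q he)

lemma unique_parent [DecidableEq V] {G : SimpleGraph V} (hG : G.IsAcyclic) {r ρ x y : V}
    (hx1 : G.Adj r x) (hx2 : (G \ fromEdgeSet {s(r, x)}).Reachable x ρ)
    (hy1 : G.Adj r y) (hy2 : (G \ fromEdgeSet {s(r, y)}).Reachable y ρ) : x = y := by
  have hbr := isAcyclic_iff_forall_adj_isBridge.mp hG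
  have build : ∀ (z : V), (hz1 : G.Adj r z) →
      (G \ fromEdgeSet {s(r, z)}).Reachable z ρ →
      ∃ P : G.Path r ρ, (P : G.Walk r ρ).getVert 1 = z := by
    intro z hz1 hz2
    refine hz2.elim_path fun q => ?_
    have hrq : r ∉ (q : (G \ fromEdgeSet {s(r, z)}).Walk z ρ).support := by
      intro hmem
      have : (G \ fromEdgeSet {s(r, z)}).Reachable z r :=
        ⟨((q : (G \ fromEdgeSet {s(r, z)}).Walk z ρ).takeUntil r hmem)⟩
      exact ((hbr hz1)) this.symm
    have hmap : (SimpleGraph.Walk.mapLe (sdiff_le)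
        (q : (G \ fromEdgeSet {s(r, z)}).Walk z ρ)).IsPath := q.2.mapLe _
    have hsupp : (SimpleGraph.Walk.mapLe (sdiff_le)
        (q : (G \ fromEdgeSet {s(r, z)}).Walk z ρ)).support
        = (q : (G \ fromEdgeSet {s(r, z)}).Walk z ρ).support := by
      simp only [SimpleGraph.Walk.mapLe, SimpleGraph.Walk.support_map]
      exact List.map_id _
    refine ⟨⟨SimpleGraph.Walk.cons hz1 (SimpleGraph.Walk.mapLe (sdiff_le)
      (q : (G \ fromEdgeSet {s(r, z)}).Walk z ρ)), ?_⟩, ?_⟩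
    · rw [SimpleGraph.Walk.cons_isPath_iff, hsupp]
      exact ⟨hmap, hrq⟩
    · simp [SimpleGraph.Walk.getVert_cons_succ]
  obtain ⟨Px, hPx⟩ := build x hx1 hx2
  obtain ⟨Py, hPy⟩ := build y hy1 hy2
  rw [hG.path_unique Px Py] at hPx
  rw [← hPx, hPy]

lemma nat_card_sigma {ι : Type*} [Fintype ι] (f : ι → Type*) [∀ i, Finite (f i)] :
    Nat.card (Σ i, f i) = ∑ i, Nat.card (f i) := by
  letI := fun i => Fintype.ofFinite (f i)
  simp [Nat.card_eq_fintype_card]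

end Lemmas

section Main

abbrev Pred (k : ℕ) (FR : SimpleGraph (Fin k) × Finset (Fin k)) (m : ℕ) : Prop :=
  FR.1.IsAcyclic ∧ Nat.card FR.1.ConnectedComponent = m ∧
    (∀ v : Fin k, ∃! r : Fin k, r ∈ FR.2 ∧ FR.1.Reachable r v)

abbrev Forests (k m : ℕ) := {FR : SimpleGraph (Fin k) × Finset (Fin k) // Pred k FR m}

lemma Pred.card_S {k m : ℕ} {FR : SimpleGraph (Fin k) × Finset (Fin k)}
    (h : Pred k FR m) : FR.2.card = m := by
  rw [← card_components_eq_card_roots h.2.2, h.2.1]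

lemma Pred.root_self {k m : ℕ} {FR : SimpleGraph (Fin k) × Finset (Fin k)}
    (h : Pred k FR m) {r : Fin k} (hr : r ∈ FR.2) :
    ∀ s ∈ FR.2, FR.1.Reachable s r → s = r := fun s hs hsr =>
  (h.2.2 r).unique ⟨hs, hsr⟩ ⟨hr, Reachable.refl _⟩

lemma pred_add_edge {k m : ℕ} {G : SimpleGraph (Fin k)} {S : Finset (Fin k)}
    (h : Pred k (G, S) (m + 1)) (v r : Fin k) (hrS : r ∈ S) (hnr : ¬ G.Reachable r v) :
    Pred k (G ⊔ edge r v, S.erase r) m := by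
  obtain ⟨hA, hC, hR⟩ := h
  have hrv : r ≠ v := fun h' => hnr (h' ▸ Reachable.refl r)
  have root_r : ∀ s ∈ S, G.Reachable s r → s = r := fun s hs hsr =>
    (hR r).unique ⟨hs, hsr⟩ ⟨hrS, Reachable.refl _⟩
  have root : ∀ w : Fin k, ∃! s : Fin k, s ∈ S.erase r ∧ (G ⊔ edge r v).Reachable s w := by
    intro w
    obtain ⟨ρw, ⟨hρwS, hρww⟩, hρwu⟩ := hR w
    obtain ⟨ρv, ⟨hρvS, hρvv⟩, hρvu⟩ := hR v
    have hρvr : ρv ≠ r := fun h' => hnr (h' ▸ hρvv)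
    by_cases hcase : ρw = r
    · refine ⟨ρv, ⟨mem_erase.mpr ⟨hρvr, hρvS⟩, ?_⟩, ?_⟩
      · have h1 : (G ⊔ edge r v).Reachable ρv v := hρvv.mono le_sup_left
        have h3 : (G ⊔ edge r v).Reachable r w := Reachable.mono le_sup_left (hcase ▸ hρww)
        exact h1.trans ((sup_edge_adj hrv).symm.reachable.trans h3)
      · rintro s ⟨hs, hsw⟩
        rw [mem_erase] at hs
        rcases reach_sup_edge hsw with h1 | ⟨h1, h2⟩ | ⟨h1, h2⟩
        · exact absurd (hρwu s ⟨hs.2, h1⟩) (hcase ▸ hs.1)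
        · exact absurd (root_r s hs.2 h1) hs.1
        · exact hρvu s ⟨hs.2, h1⟩
    · refine ⟨ρw, ⟨mem_erase.mpr ⟨hcase, hρwS⟩, hρww.mono le_sup_left⟩, ?_⟩
      rintro s ⟨hs, hsw⟩
      rw [mem_erase] at hs
      rcases reach_sup_edge hsw with h1 | ⟨h1, h2⟩ | ⟨h1, h2⟩
      · exact hρwu s ⟨hs.2, h1⟩
      · exact absurd (root_r s hs.2 h1) hs.1
      · exact absurd (hρwu r ⟨hrS, h2⟩).symm hcase
  refine ⟨isAcyclic_sup_edge hA hnr hrv, ?_, root⟩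
  rw [card_components_eq_card_roots root]
  show (S.erase r).card = m
  rw [card_erase_of_mem hrS]
  have : S.card = m + 1 := by
    rw [← card_components_eq_card_roots hR, hC]
  omega


lemma pred_del_edge {k m : ℕ} {G : SimpleGraph (Fin k)} {S : Finset (Fin k)}
    (h : Pred k (G, S) m) (r : Fin k) (hrS : r ∉ S) :
    ∃ v, G.Adj r v ∧ ¬ (G \ fromEdgeSet {s(r, v)}).Reachable r v ∧
      Pred k (G \ fromEdgeSet {s(r, v)}, insert r S) (m + 1) := by
  obtain ⟨hA, hC, hR⟩ := h
  obtain ⟨ρ, ⟨hρS, hρr⟩, hρu⟩ := hR r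
  have hne : r ≠ ρ := fun h' => hrS (h' ▸ hρS)
  obtain ⟨v, hAdj, hreach⟩ := exists_parent hρr.symm hne
  set G₀ := G \ fromEdgeSet {s(r, v)} with hG₀
  have hbridge : ¬ G₀.Reachable r v := ((isAcyclic_iff_forall_adj_isBridge.mp hA) hAdj)
  have hG_eq : G₀ ⊔ edge r v = G := sdiff_sup_edge_eq hAdj
  have up : ∀ x y : Fin k, G₀.Reachable x y → G.Reachable x y := fun x y hxy =>
    hxy.mono sdiff_le
  have decomp : ∀ x y : Fin k, G.Reachable x y → G₀.Reachable x y ∨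
      (G₀.Reachable x r ∧ G₀.Reachable v y) ∨ (G₀.Reachable x v ∧ G₀.Reachable r y) := by
    intro x y hxy
    exact reach_sup_edge (by rw [hG_eq]; exact hxy)
  have noSr : ∀ s ∈ S, ¬ G₀.Reachable s r := by
    intro s hs hsr
    have hsρ : s = ρ := hρu s ⟨hs, up _ _ hsr⟩
    subst hsρ
    exact hbridge (hsr.symm.trans hreach.symm)
  have root : ∀ w : Fin k, ∃! s : Fin k, s ∈ insert r S ∧ G₀.Reachable s w := by
    intro w
    obtain ⟨ρw, ⟨hρwS, hρww⟩, hρwu⟩ := hR w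
    by_cases hc : G₀.Reachable r w
    · refine ⟨r, ⟨mem_insert_self _ _, hc⟩, ?_⟩
      rintro s ⟨hs, hsw⟩
      rcases mem_insert.mp hs with rfl | hs'
      · rfl
      · exact absurd (hsw.trans hc.symm) (noSr s hs')
    · refine ⟨ρw, ⟨mem_insert_of_mem hρwS, ?_⟩, ?_⟩
      · rcases decomp _ _ hρww with h1 | ⟨h1, h2⟩ | ⟨h1, h2⟩
        · exact h1
        · exact absurd h1 (noSr _ hρwS)
        · exact absurd h2 hc
      · rintro s ⟨hs, hsw⟩
        rcases mem_insert.mp hs with rfl | hs'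
        · exact absurd hsw hc
        · exact hρwu s ⟨hs', up _ _ hsw⟩
  refine ⟨v, hAdj, hbridge, isAcyclic_sdiff hA, ?_, root⟩
  rw [card_components_eq_card_roots root]
  show (insert r S).card = m + 1
  rw [card_insert_of_notMem hrS]
  have : S.card = m := by rw [← card_components_eq_card_roots hR, hC]
  omega

abbrev TA (k m : ℕ) := {x : (SimpleGraph (Fin k) × Finset (Fin k)) × Fin k × Fin k //
  Pred k x.1 (m + 1) ∧ x.2.2 ∈ x.1.2 ∧ ¬ x.1.1.Reachable x.2.2 x.2.1}

abbrev TB (k m : ℕ) := {y : (SimpleGraph (Fin k) × Finset (Fin k)) × Fin k //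
  Pred k y.1 m ∧ y.2 ∉ y.1.2}

def phi (k m : ℕ) : TA k m → TB k m := fun x =>
  ⟨((x.1.1.1 ⊔ edge x.1.2.2 x.1.2.1, x.1.1.2.erase x.1.2.2), x.1.2.2),
    pred_add_edge x.2.1 x.1.2.1 x.1.2.2 x.2.2.1 x.2.2.2, notMem_erase _ _⟩

lemma phi_bijective (k m : ℕ) : Function.Bijective (phi k m) := by
  constructor
  · rintro ⟨⟨⟨G1, S1⟩, v1, r1⟩, hP1, hr1, hnr1⟩ ⟨⟨⟨G2, S2⟩, v2, r2⟩, hP2, hr2, hnr2⟩ heq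
    simp only [phi, Subtype.mk.injEq, Prod.mk.injEq] at heq
    obtain ⟨⟨hGeq, hSeq⟩, hreq⟩ := heq
    subst hreq
    have hr1' : r1 ∈ S1 := hr1
    have hr2' : r1 ∈ S2 := hr2
    have hSe : S1 = S2 := by
      rw [← insert_erase hr1', ← insert_erase hr2', hSeq]
    have hnA1 : ¬ G1.Adj r1 v1 := fun h' => hnr1 h'.reachable
    have hnA2 : ¬ G2.Adj r1 v2 := fun h' => hnr2 h'.reachable
    have hrv1 : r1 ≠ v1 := fun h' => hnr1 (h' ▸ Reachable.refl r1)
    have hrv2 : r1 ≠ v2 := fun h' => hnr2 (h' ▸ Reachable.refl r1)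
    set G' := G1 ⊔ edge r1 v1 with hG'
    have hP' : Pred k (G', S1.erase r1) m := pred_add_edge hP1 v1 r1 hr1 hnr1
    obtain ⟨ρ', ⟨hρ'S, hρ'r⟩, hρ'u⟩ := hP'.2.2 r1
    have hρ'ne : ρ' ≠ r1 := (mem_erase.mp hρ'S).1
    have spec : ∀ (G0 : SimpleGraph (Fin k)) (v0 : Fin k), r1 ≠ v0 → ¬ G0.Adj r1 v0 →
        Pred k (G0, S1) (m+1) → G' = G0 ⊔ edge r1 v0 →
        G'.Adj r1 v0 ∧ (G' \ fromEdgeSet {s(r1, v0)}).Reachable v0 ρ' := by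
      intro G0 v0 hne0 hnA0 hP0 hGe
      refine ⟨by rw [hGe]; exact sup_edge_adj hne0, ?_⟩
      rw [hGe, sup_edge_sdiff_eq hnA0 hne0]
      have hρ'r0 : G'.Reachable ρ' r1 := hρ'r
      rw [hGe] at hρ'r0
      rcases reach_sup_edge hρ'r0 with h1 | ⟨h1, h2⟩ | ⟨h1, h2⟩
      · exact absurd (hP0.root_self hr1 ρ' (mem_erase.mp hρ'S).2 h1) hρ'ne
      · exact absurd (hP0.root_self hr1 ρ' (mem_erase.mp hρ'S).2 h1) hρ'ne
      · exact h1.symm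
    have spec1 := spec G1 v1 hrv1 hnA1 hP1 rfl
    have spec2 := spec G2 v2 hrv2 hnA2 (hSe ▸ hP2) hGeq
    have hveq : v1 = v2 := unique_parent hP'.1 spec1.1 spec1.2 spec2.1 spec2.2
    have hGe : G1 = G2 := by
      have e1 : G' \ fromEdgeSet {s(r1, v1)} = G1 := sup_edge_sdiff_eq hnA1 hrv1
      have e2 : (G2 ⊔ edge r1 v2) \ fromEdgeSet {s(r1, v2)} = G2 :=
        sup_edge_sdiff_eq hnA2 hrv2
      rw [← e1, ← e2, ← hGeq, hveq]
    subst hveq hGe hSe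
    rfl
  · rintro ⟨⟨⟨G, S⟩, r⟩, hP, hrS⟩
    obtain ⟨v, hAdj, hbridge, hP'⟩ := pred_del_edge hP r hrS
    refine ⟨⟨((G \ fromEdgeSet {s(r, v)}, insert r S), v, r), hP', mem_insert_self _ _,
      hbridge⟩, ?_⟩
    simp only [phi, Subtype.mk.injEq, Prod.mk.injEq]
    exact ⟨⟨sdiff_sup_edge_eq hAdj, erase_insert hrS⟩, trivial⟩


lemma inner_count {k m : ℕ} {G : SimpleGraph (Fin k)} {S : Finset (Fin k)}
    (hR : ∀ v : Fin k, ∃! r : Fin k, r ∈ S ∧ G.Reachable r v)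
    (hcard : S.card = m + 1) (v : Fin k) :
    Nat.card {r : Fin k // r ∈ S ∧ ¬ G.Reachable r v} = m := by
  classical
  rw [Nat.card_eq_fintype_card, Fintype.card_subtype]
  have h1 : (univ.filter fun r => r ∈ S ∧ ¬ G.Reachable r v)
      = S.filter (fun r => ¬ G.Reachable r v) := by
    ext r; simp [and_comm]
  rw [h1]
  obtain ⟨ρ, ⟨hρS, hρv⟩, hρu⟩ := hR v
  have hf : S.filter (fun r => G.Reachable r v) = {ρ} := by
    ext s
    simp only [mem_filter, mem_singleton]
    constructor
    · rintro ⟨hs1, hs2⟩; exact hρu s ⟨hs1, hs2⟩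
    · rintro rfl; exact ⟨hρS, hρv⟩
  have h2 := card_filter_add_card_filter_not (s := S)
    (p := fun r => G.Reachable r v)
  rw [hf] at h2
  simp only [card_singleton] at h2
  omega

lemma card_TA (k m : ℕ) :
    Nat.card (TA k m) = Nat.card (Forests k (m + 1)) * (k * m) := by
  classical
  have e : TA k m ≃ Σ FR : Forests k (m + 1),
      Σ _v : Fin k, {r : Fin k // r ∈ FR.1.2 ∧ ¬ FR.1.1.Reachable r _v} :=
    { toFun := fun x => ⟨⟨x.1.1, x.2.1⟩, x.1.2.1, ⟨x.1.2.2, x.2.2.1, x.2.2.2⟩⟩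
      invFun := fun y => ⟨(y.1.1, y.2.1, y.2.2.1), y.1.2, y.2.2.2.1, y.2.2.2.2⟩
      left_inv := fun x => rfl
      right_inv := fun y => rfl }
  rw [Nat.card_congr e]
  letI : Fintype (Forests k (m + 1)) := Fintype.ofFinite _
  rw [nat_card_sigma]
  have hterm : ∀ FR : Forests k (m + 1),
      Nat.card (Σ _v : Fin k, {r : Fin k // r ∈ FR.1.2 ∧ ¬ FR.1.1.Reachable r _v})
        = k * m := by
    intro FR
    rw [nat_card_sigma]
    have : ∀ v : Fin k, Nat.card {r : Fin k // r ∈ FR.1.2 ∧ ¬ FR.1.1.Reachable r v} = m := by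
      intro v
      exact inner_count FR.2.2.2 FR.2.card_S v
    simp only [this, Finset.sum_const, Finset.card_univ, Fintype.card_fin, smul_eq_mul]
  rw [Finset.sum_congr rfl (fun FR _ => hterm FR)]
  rw [Finset.sum_const, Finset.card_univ, smul_eq_mul, Nat.card_eq_fintype_card]

lemma card_TB (k m : ℕ) :
    Nat.card (TB k m) = Nat.card (Forests k m) * (k - m) := by
  classical
  have e : TB k m ≃ Σ FR : Forests k m, {r : Fin k // r ∉ FR.1.2} :=
    { toFun := fun x => ⟨⟨x.1.1, x.2.1⟩, ⟨x.1.2, x.2.2⟩⟩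
      invFun := fun y => ⟨(y.1.1, y.2.1), y.1.2, y.2.2⟩
      left_inv := fun x => rfl
      right_inv := fun y => rfl }
  rw [Nat.card_congr e]
  letI : Fintype (Forests k m) := Fintype.ofFinite _
  rw [nat_card_sigma]
  have hterm : ∀ FR : Forests k m, Nat.card {r : Fin k // r ∉ FR.1.2} = k - m := by
    intro FR
    rw [Nat.card_eq_fintype_card, Fintype.card_subtype]
    have h1 : (univ.filter fun r => r ∉ FR.1.2) = FR.1.2ᶜ := by
      ext r; simp
    rw [h1, card_compl, FR.2.card_S, Fintype.card_fin]
  rw [Finset.sum_congr rfl (fun FR _ => hterm FR)]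
  rw [Finset.sum_const, Finset.card_univ, smul_eq_mul, Nat.card_eq_fintype_card]

lemma F_rec (k m : ℕ) :
    Nat.card (Forests k (m + 1)) * (k * m) = Nat.card (Forests k m) * (k - m) := by
  rw [← card_TA, ← card_TB]
  exact Nat.card_eq_of_bijective _ (phi_bijective k m)

lemma pred_bot (k : ℕ) : Pred k ((⊥ : SimpleGraph (Fin k)), (univ : Finset (Fin k))) k := by
  have root : ∀ v : Fin k, ∃! r : Fin k, r ∈ (univ : Finset (Fin k)) ∧
      (⊥ : SimpleGraph (Fin k)).Reachable r v := fun v =>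
    ⟨v, ⟨mem_univ v, Reachable.refl v⟩, fun r hr => reachable_bot.mp hr.2⟩
  refine ⟨isAcyclic_bot, ?_, root⟩
  rw [card_components_eq_card_roots root]
  simp

lemma F_base (k : ℕ) : Nat.card (Forests k k) = 1 := by
  have all_eq : ∀ x : Forests k k, x = ⟨(⊥, univ), pred_bot k⟩ := by
    rintro ⟨⟨G, S⟩, hA, hC, hR⟩
    have hcard : S.card = Fintype.card (Fin k) := by
      have : S.card = k := Pred.card_S (FR := (G, S)) ⟨hA, hC, hR⟩
      simp [this]
    have hS : S = univ := eq_univ_of_card S hcard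
    have hG : G = ⊥ := by
      ext u v
      simp only [bot_adj, iff_false]
      intro hAdj
      have huv : u = v := (hR v).unique ⟨hS ▸ mem_univ u, hAdj.reachable⟩
        ⟨hS ▸ mem_univ v, Reachable.refl v⟩
      exact hAdj.ne huv
    subst hS hG
    rfl
  exact Nat.card_eq_one_iff_unique.mpr
    ⟨⟨fun a b => (all_eq a).trans (all_eq b).symm⟩, ⟨⟨(⊥, univ), pred_bot k⟩⟩⟩

lemma main_count (k : ℕ) : ∀ d m : ℕ, 1 ≤ m → m + d = k →
    Nat.card (Forests k m) = (k - 1).choose (m - 1) * k ^ (k - m) := by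
  intro d
  induction d with
  | zero =>
    intro m h1 h2
    have hmk : m = k := by omega
    subst hmk
    rw [F_base]
    simp [Nat.choose_self]
  | succ d ih =>
    intro m h1 h2
    have hmk : m < k := by omega
    have ih' := ih (m + 1) (by omega) (by omega)
    simp only [Nat.add_sub_cancel] at ih'
    have hrec := F_rec k m
    rw [ih'] at hrec
    have hpow : k ^ (k - (m + 1)) * k = k ^ (k - m) := by
      rw [← pow_succ]
      congr 1
      omega
    have hchoose : (k - 1).choose m * m = (k - 1).choose (m - 1) * (k - m) := by
      have h3 := Nat.choose_succ_right_eq (k - 1) (m - 1)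
      have h4 : m - 1 + 1 = m := by omega
      have h5 : k - 1 - (m - 1) = k - m := by omega
      rw [h4, h5] at h3
      exact h3
    have hkm : 0 < k - m := by omega
    apply Nat.eq_of_mul_eq_mul_right hkm
    rw [← hrec]
    calc (k - 1).choose m * k ^ (k - (m + 1)) * (k * m)
        = ((k - 1).choose m * m) * (k ^ (k - (m + 1)) * k) := by ring
      _ = ((k - 1).choose (m - 1) * (k - m)) * k ^ (k - m) := by rw [hchoose, hpow]
      _ = (k - 1).choose (m - 1) * k ^ (k - m) * (k - m) := by ring

end Main

/-- The number of labelled rooted forests on `k` vertices (an acyclic graph on `Fin k`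
together with a set of roots, one in each connected component) with exactly `m`
connected components equals `C(k-1, m-1) * k^(k-m)`. -/
theorem stmt_0 (k m : ℕ) (hk : 1 ≤ k) (hm : 1 ≤ m) (hmk : m ≤ k) :
    Nat.card {FR : SimpleGraph (Fin k) × Finset (Fin k) //
      FR.1.IsAcyclic ∧
      Nat.card FR.1.ConnectedComponent = m ∧
      (∀ v : Fin k, ∃! r : Fin k, r ∈ FR.2 ∧ FR.1.Reachable r v)} =
    (k - 1).choose (m - 1) * k ^ (k - m) := main_count k (k - m) m hm (by omega)
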